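/- Let V be a Hilbert space, A: V → V* linear bounded (C_b) and coercive (C_a), f, d ∈ V*, and S(g, ψ) the solution operator of the VI with obstacle Φ(ψ): find u ≤ Φ(ψ) with ⟨Au − g, u − v⟩ ≤ 0 for all v ≤ Φ(ψ). Assume the continuous-dependence estimate ‖S(g₁,ψ₁) − S(g₂,ψ₂)‖ ≤ (1 + C_b/C_a)‖Φ(ψ₁) − Φ(ψ₂)‖ + (1/C_a)‖g₁ − g₂‖_{V*}, and that Φ is Lipschitz on the ball B_ε(y) with constant C_Φ < C_a/(C_a + C_b), where y = S(f, y). Then for any 0 < R ≤ ε and any s ≥ 0 with s ≤ C_a ‖d‖_{V*}^{-1} R (1 − (1 + C_b/C_a) C_Φ), the map v ↦ S(f + s d, v) maps the closed ball B_R(y) into itself and is a contraction on B_R(y) with contraction constant C_Φ(1 + C_b/C_a) < 1. -/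
import Mathlib


/-- for `s` small enough, the VI solution map `v ↦ S(f + s d, v)`
is a self-map of the closed ball `B_R(y)` around the QVI solution `y = S(f,y)`
and a contraction there with constant `C_Φ (1 + C_b/C_a) < 1`. -/
theorem vi_iteration_contraction
    {V : Type*} [NormedAddCommGroup V] [InnerProductSpace ℝ V]
    (Ca Cb : ℝ) (hCa : 0 < Ca) (hCb : 0 < Cb)
    (S : (V →L[ℝ] ℝ) → V → V) (Φ : V → V)
    (hdep : ∀ (g₁ g₂ : V →L[ℝ] ℝ) (ψ₁ ψ₂ : V),
      ‖S g₁ ψ₁ - S g₂ ψ₂‖ ≤ (1 + Cb / Ca) * ‖Φ ψ₁ - Φ ψ₂‖ + Ca⁻¹ * ‖g₁ - g₂‖)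
    (f d : V →L[ℝ] ℝ) (y : V) (hy : y = S f y)
    (ε CΦ : ℝ) (hε : 0 < ε) (hCΦ : CΦ < Ca / (Ca + Cb))
    (hΦlip : ∀ u ∈ Metric.closedBall y ε, ∀ v ∈ Metric.closedBall y ε,
      ‖Φ u - Φ v‖ ≤ CΦ * ‖u - v‖)
    (R : ℝ) (hR0 : 0 < R) (hRε : R ≤ ε)
    (s : ℝ) (hs0 : 0 ≤ s)
    (hs : s ≤ Ca * ‖d‖⁻¹ * R * (1 - (1 + Cb / Ca) * CΦ)) :
    CΦ * (1 + Cb / Ca) < 1 ∧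
    (∀ v ∈ Metric.closedBall y R, S (f + s • d) v ∈ Metric.closedBall y R) ∧
    (∀ v ∈ Metric.closedBall y R, ∀ w ∈ Metric.closedBall y R,
      ‖S (f + s • d) v - S (f + s • d) w‖ ≤ CΦ * (1 + Cb / Ca) * ‖v - w‖) := by
  have hk1 : (0:ℝ) < 1 + Cb / Ca := by positivity
  have hsum : (0:ℝ) < Ca + Cb := by linarith
  have hkey : CΦ * (1 + Cb / Ca) < 1 := by
    have h1 : CΦ * (1 + Cb / Ca) < (Ca / (Ca + Cb)) * (1 + Cb / Ca) :=
      mul_lt_mul_of_pos_right hCΦ hk1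
    have h2 : (Ca / (Ca + Cb)) * (1 + Cb / Ca) = 1 := by
      field_simp
    linarith
  refine ⟨hkey, ?_, ?_⟩
  · -- self map
    intro v hv
    rw [Metric.mem_closedBall] at hv ⊢
    have hvε : v ∈ Metric.closedBall y ε :=
      Metric.mem_closedBall.mpr (le_trans hv hRε)
    have hyε : y ∈ Metric.closedBall y ε := by
      simpa using le_of_lt (lt_of_lt_of_le hR0 hRε)
    have hΦ : ‖Φ v - Φ y‖ ≤ CΦ * ‖v - y‖ := hΦlip v hvε y hyε
    have hnorm : ‖(f + s • d) - f‖ = s * ‖d‖ := by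
      rw [add_sub_cancel_left]
      rw [show ‖s • d‖ = ‖s‖ * ‖d‖ from norm_smul s d, Real.norm_eq_abs,
        abs_of_nonneg hs0]
    have hd : Ca⁻¹ * (s * ‖d‖) ≤ R * (1 - (1 + Cb / Ca) * CΦ) := by
      rcases eq_or_ne ‖d‖ 0 with h0 | h0
      · rw [h0]
        have : (0:ℝ) < 1 - (1 + Cb / Ca) * CΦ := by nlinarith [hkey]
        nlinarith
      · have hdpos : 0 < ‖d‖ := lt_of_le_of_ne (norm_nonneg d) (Ne.symm h0)
        have : s * ‖d‖ ≤ Ca * R * (1 - (1 + Cb / Ca) * CΦ) := by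
          have := mul_le_mul_of_nonneg_right hs (le_of_lt hdpos)
          calc s * ‖d‖ ≤ Ca * ‖d‖⁻¹ * R * (1 - (1 + Cb / Ca) * CΦ) * ‖d‖ := this
            _ = Ca * R * (1 - (1 + Cb / Ca) * CΦ) * (‖d‖⁻¹ * ‖d‖) := by ring
            _ = Ca * R * (1 - (1 + Cb / Ca) * CΦ) := by
                rw [inv_mul_cancel₀ h0, mul_one]
        rw [inv_mul_le_iff₀ hCa]
        linarith
    have hdist : dist (S (f + s • d) v) y = ‖S (f + s • d) v - S f y‖ := by
      rw [dist_eq_norm]; rw [← hy]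
    rw [hdist]
    have hmain := hdep (f + s • d) f v y
    rw [hnorm] at hmain
    rcases le_or_gt 0 CΦ with hC0 | hC0
    · have hΦ' : ‖Φ v - Φ y‖ ≤ CΦ * R := by
        calc ‖Φ v - Φ y‖ ≤ CΦ * ‖v - y‖ := hΦ
          _ ≤ CΦ * R := by
              apply mul_le_mul_of_nonneg_left _ hC0
              rwa [← dist_eq_norm]
      calc ‖S (f + s • d) v - S f y‖
          ≤ (1 + Cb / Ca) * ‖Φ v - Φ y‖ + Ca⁻¹ * (s * ‖d‖) := hmain
        _ ≤ (1 + Cb / Ca) * (CΦ * R) + R * (1 - (1 + Cb / Ca) * CΦ) := by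
            have := mul_le_mul_of_nonneg_left hΦ' (le_of_lt hk1)
            linarith
        _ = R := by ring
    · -- CΦ < 0 : then V must be a subsingleton, else contradiction
      rcases subsingleton_or_nontrivial V with hsub | hnt
      · have : S (f + s • d) v - S f y = 0 := Subsingleton.elim _ _
        rw [this, norm_zero]
        exact le_of_lt hR0
      · exfalso
        obtain ⟨x, hx⟩ := exists_ne (0 : V)
        have hxn : (0:ℝ) < ‖x‖ := norm_pos_iff.mpr hx
        set u := y + (ε / ‖x‖) • x with hu
        have huy : ‖u - y‖ = ε := by
          rw [hu, add_sub_cancel_left, norm_smul, Real.norm_eq_abs,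
            abs_of_nonneg (by positivity : (0:ℝ) ≤ ε / ‖x‖),
            div_mul_cancel₀ _ (ne_of_gt hxn)]
        have huε : u ∈ Metric.closedBall y ε := by
          rw [Metric.mem_closedBall, dist_eq_norm, huy]
        have := hΦlip u huε y hyε
        rw [huy] at this
        nlinarith [norm_nonneg (Φ u - Φ y)]
  · -- contraction
    intro v hv w hw
    have hvε : v ∈ Metric.closedBall y ε :=
      Metric.closedBall_subset_closedBall hRε hv
    have hwε : w ∈ Metric.closedBall y ε :=
      Metric.closedBall_subset_closedBall hRε hw
    have hΦ : ‖Φ v - Φ w‖ ≤ CΦ * ‖v - w‖ := hΦlip v hvε w hwε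
    have hmain := hdep (f + s • d) (f + s • d) v w
    simp only [sub_self, norm_zero, mul_zero, add_zero] at hmain
    calc ‖S (f + s • d) v - S (f + s • d) w‖
        ≤ (1 + Cb / Ca) * ‖Φ v - Φ w‖ := hmain
      _ ≤ (1 + Cb / Ca) * (CΦ * ‖v - w‖) :=
          mul_le_mul_of_nonneg_left hΦ (le_of_lt hk1)
      _ = CΦ * (1 + Cb / Ca) * ‖v - w‖ := by ring
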